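/- Let N ≥ 1, 0 ≤ p̲ ≤ p̄, κ ≥ 0, and let Λ be a real symmetric positive definite (N+1)×(N+1) matrix. For p ∈ ℝ^N write p̃ = (p, 1) ∈ ℝ^{N+1}. Let α, α̂, α̌ ∈ ℝ^N and B, B̂, B̌ be real N×N matrices; form the N×(N+1) augmented matrices ℬ = [B|α], ℬ̂ = [B̂|α̂], ℬ̌ = [B̌|α̌], and define D(p) = ℬ p̃ = α + Bp, Ď(p) = ℬ̌ p̃ = α̌ + B̌p, r(p) = ⟨p, D(p)⟩, ř(p) = ⟨p, Ď(p)⟩. Suppose that for every i ∈ {1,…,N}: ‖Λ^{1/2} (ℬ − ℬ̂)ᵀ e_i‖_2 ≤ κ and ‖Λ^{1/2} (ℬ̌ − ℬ̂)ᵀ e_i‖_2 ≤ κ. Then for every p ∈ [p̲, p̄]^N: ‖Ď(p) − D(p)‖_∞ ≤ 2 √(N+1) κ ‖Λ^{-1/2} p̃‖_∞ and |ř(p) − r(p)| ≤ 2 N p̄ √(N+1) κ ‖Λ^{-1/2} p̃‖_∞. -/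

import Mathlib

open Matrix

section
open scoped ComplexOrder
/-- The square root of a positive semidefinite matrix, as defined in Mathlib of December 2024
(removed since; restored here with its old definition). -/
noncomputable def Matrix.PosSemidef.sqrt {n 𝕜 : Type*} [Fintype n] [RCLike 𝕜] [DecidableEq n]
    {A : Matrix n n 𝕜} (hA : A.PosSemidef) : Matrix n n 𝕜 :=
  hA.isHermitian.eigenvectorUnitary.1 *
    diagonal ((↑) ∘ (Real.sqrt ∘ hA.isHermitian.eigenvalues)) *
    (star hA.isHermitian.eigenvectorUnitary : Matrix n n 𝕜)

end

lemma psd_sqrt_transpose_real {n : Type*} [Fintype n] [DecidableEq n]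
    {A : Matrix n n ℝ} (hA : A.PosSemidef) : hA.sqrtᵀ = hA.sqrt := by
  unfold Matrix.PosSemidef.sqrt
  rw [Matrix.transpose_mul, Matrix.transpose_mul, Matrix.diagonal_transpose,
    Matrix.star_eq_conjTranspose, Matrix.conjTranspose_eq_transpose_of_trivial,
    Matrix.transpose_transpose, Matrix.mul_assoc]

lemma psd_sqrt_mul_self_real {n : Type*} [Fintype n] [DecidableEq n]
    {A : Matrix n n ℝ} (hA : A.PosSemidef) : hA.sqrt * hA.sqrt = A := by
  unfold Matrix.PosSemidef.sqrt
  set U := hA.isHermitian.eigenvectorUnitary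
  have hU : (star U : Matrix n n ℝ) * U.1 = 1 := Unitary.coe_star_mul_self U
  have hD : diagonal ((RCLike.ofReal : ℝ → ℝ) ∘ (Real.sqrt ∘ hA.isHermitian.eigenvalues)) *
      diagonal ((RCLike.ofReal : ℝ → ℝ) ∘ (Real.sqrt ∘ hA.isHermitian.eigenvalues)) =
      diagonal (RCLike.ofReal ∘ hA.isHermitian.eigenvalues : n → ℝ) := by
    rw [Matrix.diagonal_mul_diagonal]
    congr 1; funext i
    simp [Real.mul_self_sqrt (hA.eigenvalues_nonneg i)]
  calc _ = U.1 * (diagonal ((RCLike.ofReal : ℝ → ℝ) ∘ (Real.sqrt ∘ hA.isHermitian.eigenvalues)) *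
      ((star U : Matrix n n ℝ) * U.1) *
      diagonal ((RCLike.ofReal : ℝ → ℝ) ∘ (Real.sqrt ∘ hA.isHermitian.eigenvalues))) * (star U : Matrix n n ℝ) := by
        simp only [Matrix.mul_assoc]
    _ = _ := by
      rw [hU, Matrix.mul_one, hD]
      conv_rhs => rw [hA.isHermitian.spectral_theorem]
      simp [Unitary.conjStarAlgAut_apply]
      rfl


lemma cauchy_abs {n : ℕ} (f g : Fin n → ℝ) :
    |∑ j, f j * g j| ≤ Real.sqrt (∑ j, f j ^ 2) * Real.sqrt (∑ j, g j ^ 2) := by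
  rw [abs_le]
  refine ⟨?_, Real.sum_mul_le_sqrt_mul_sqrt _ f g⟩
  have h2 := Real.sum_mul_le_sqrt_mul_sqrt Finset.univ f (fun j => -g j)
  simp only [mul_neg, neg_sq, Finset.sum_neg_distrib] at h2
  linarith

lemma l2_triangle {n : ℕ} (a b : Fin n → ℝ) :
    Real.sqrt (∑ j, (a j + b j) ^ 2) ≤
      Real.sqrt (∑ j, a j ^ 2) + Real.sqrt (∑ j, b j ^ 2) := by
  have h1 : ∑ j, (a j + b j) ^ 2 ≤
      (Real.sqrt (∑ j, a j ^ 2) + Real.sqrt (∑ j, b j ^ 2)) ^ 2 := by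
    have hab : ∑ j, a j * b j ≤ Real.sqrt (∑ j, a j ^ 2) * Real.sqrt (∑ j, b j ^ 2) :=
      Real.sum_mul_le_sqrt_mul_sqrt _ a b
    have ha : Real.sqrt (∑ j, a j ^ 2) ^ 2 = ∑ j, a j ^ 2 :=
      Real.sq_sqrt (by positivity)
    have hb : Real.sqrt (∑ j, b j ^ 2) ^ 2 = ∑ j, b j ^ 2 :=
      Real.sq_sqrt (by positivity)
    have hexp : ∑ j, (a j + b j) ^ 2 = ∑ j, a j ^ 2 + 2 * ∑ j, a j * b j + ∑ j, b j ^ 2 := by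
      rw [Finset.mul_sum, ← Finset.sum_add_distrib, ← Finset.sum_add_distrib]
      apply Finset.sum_congr rfl; intros; ring
    rw [hexp]; nlinarith
  calc Real.sqrt (∑ j, (a j + b j) ^ 2) ≤
      Real.sqrt ((Real.sqrt (∑ j, a j ^ 2) + Real.sqrt (∑ j, b j ^ 2)) ^ 2) :=
        Real.sqrt_le_sqrt h1
    _ = _ := Real.sqrt_sq (by positivity)

/-- deterministic core of Lemma 1 / Corollary 1: if both the true augmented
parameter matrix `[B|α]` and the projected estimate `[B̌|α̌]` are within row-wise distance
`κ` of `[B̂|α̂]` in the `‖Λ^{1/2}·‖₂` sense, then the estimated demand and revenue are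
within the `ℓ∞`-norm-based confidence radii of the true ones, uniformly over the price
box. -/
theorem stmt14 (N : ℕ) (hN : 1 ≤ N) (pl pu : ℝ) (hpl : 0 ≤ pl) (hplu : pl ≤ pu)
    (κ : ℝ) (hκ : 0 ≤ κ)
    (Λ : Matrix (Fin (N + 1)) (Fin (N + 1)) ℝ) (hΛ : Λ.PosDef)
    (α αh αc : Fin N → ℝ) (B Bh Bc : Matrix (Fin N) (Fin N) ℝ)
    (htrue : ∀ i : Fin N,
      Real.sqrt (∑ j, ((hΛ.posSemidef.sqrt *ᵥ
        Fin.snoc (fun j => B i j - Bh i j) (α i - αh i)) j) ^ 2) ≤ κ)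
    (hcheck : ∀ i : Fin N,
      Real.sqrt (∑ j, ((hΛ.posSemidef.sqrt *ᵥ
        Fin.snoc (fun j => Bc i j - Bh i j) (αc i - αh i)) j) ^ 2) ≤ κ) :
    ∀ p : Fin N → ℝ, (∀ i, pl ≤ p i ∧ p i ≤ pu) →
      ‖(αc + Bc *ᵥ p) - (α + B *ᵥ p)‖ ≤
        2 * Real.sqrt ((N : ℝ) + 1) * κ * ‖(hΛ.posSemidef.sqrt)⁻¹ *ᵥ Fin.snoc p 1‖ ∧
      |p ⬝ᵥ (αc + Bc *ᵥ p) - p ⬝ᵥ (α + B *ᵥ p)| ≤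
        2 * N * pu * Real.sqrt ((N : ℝ) + 1) * κ *
          ‖(hΛ.posSemidef.sqrt)⁻¹ *ᵥ Fin.snoc p 1‖ := by
  intro p hp
  set S := hΛ.posSemidef.sqrt with hS
  have hsym : Sᵀ = S := psd_sqrt_transpose_real hΛ.posSemidef
  have hSS : S * S = Λ := psd_sqrt_mul_self_real hΛ.posSemidef
  have hdet : IsUnit S.det := by
    have h1 : S.det * S.det = Λ.det := by rw [← Matrix.det_mul, hSS]
    have h2 : 0 < Λ.det := hΛ.det_pos
    have : S.det ≠ 0 := by intro h; rw [h, mul_zero] at h1; linarith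
    exact isUnit_iff_ne_zero.2 this
  set w := S⁻¹ *ᵥ Fin.snoc p 1 with hw
  have hwnn : (0:ℝ) ≤ ‖w‖ := norm_nonneg _
  -- key dot product identity
  have key : ∀ v : Fin (N+1) → ℝ, v ⬝ᵥ Fin.snoc p 1 = (S *ᵥ v) ⬝ᵥ w := by
    intro v
    conv_lhs => rw [show (Fin.snoc p 1 : Fin (N+1) → ℝ) = (S * S⁻¹) *ᵥ Fin.snoc p 1 by
      rw [Matrix.mul_nonsing_inv S hdet, Matrix.one_mulVec]]
    rw [← Matrix.mulVec_mulVec, dotProduct_mulVec, ← Matrix.mulVec_transpose, hsym]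
  -- ℓ2 norm of w bounded by sqrt(N+1) * sup norm
  have hl2w : Real.sqrt (∑ j, w j ^ 2) ≤ Real.sqrt ((N:ℝ)+1) * ‖w‖ := by
    have h1 : ∑ j, w j ^ 2 ≤ ((N:ℝ)+1) * ‖w‖ ^ 2 := by
      calc ∑ j, w j ^ 2 ≤ ∑ _j : Fin (N+1), ‖w‖ ^ 2 := by
            apply Finset.sum_le_sum
            intro j _
            have := norm_le_pi_norm w j
            rw [Real.norm_eq_abs] at this
            nlinarith [abs_nonneg (w j), neg_abs_le (w j), le_abs_self (w j)]
        _ = ((N:ℝ)+1) * ‖w‖ ^ 2 := by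
            rw [Finset.sum_const, Finset.card_univ, Fintype.card_fin]
            push_cast; ring
    calc Real.sqrt (∑ j, w j ^ 2) ≤ Real.sqrt (((N:ℝ)+1) * ‖w‖ ^ 2) := Real.sqrt_le_sqrt h1
      _ = Real.sqrt ((N:ℝ)+1) * ‖w‖ := by
          rw [Real.sqrt_mul (by positivity), Real.sqrt_sq hwnn]
  -- per-coordinate bound
  set d := (αc + Bc *ᵥ p) - (α + B *ᵥ p) with hd
  have hcoord : ∀ i : Fin N, |d i| ≤ 2 * Real.sqrt ((N:ℝ)+1) * κ * ‖w‖ := by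
    intro i
    set e : Fin (N+1) → ℝ := Fin.snoc (fun j => Bc i j - B i j) (αc i - α i) with he
    have hde : d i = e ⬝ᵥ Fin.snoc p 1 := by
      rw [dotProduct, Fin.sum_univ_castSucc]
      simp only [he, Fin.snoc_castSucc, Fin.snoc_last, mul_one]
      simp only [hd, Pi.sub_apply, Pi.add_apply, Matrix.mulVec, dotProduct]
      have hsub : ∑ j, (Bc i j - B i j) * p j
          = (∑ j, Bc i j * p j) - ∑ j, B i j * p j := by
        rw [← Finset.sum_sub_distrib]
        apply Finset.sum_congr rfl; intros; ring
      rw [hsub]; ring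
    -- e = echeck + (- etrue)
    set ec : Fin (N+1) → ℝ := Fin.snoc (fun j => Bc i j - Bh i j) (αc i - αh i) with hec
    set et : Fin (N+1) → ℝ := Fin.snoc (fun j => B i j - Bh i j) (α i - αh i) with het
    have hee : e = ec - et := by
      funext j
      refine Fin.lastCases ?_ ?_ j <;> simp [he, hec, het] <;> intro j' <;> ring
    have hnorm : Real.sqrt (∑ j, (S *ᵥ e) j ^ 2) ≤ 2 * κ := by
      have hsplit : S *ᵥ e = fun j => (S *ᵥ ec) j + (-(S *ᵥ et)) j := by
        funext j
        rw [hee]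
        simp [sub_eq_add_neg, Matrix.mulVec_add, Matrix.mulVec_neg]
      rw [hsplit]
      calc Real.sqrt (∑ j, ((S *ᵥ ec) j + (-(S *ᵥ et)) j) ^ 2)
          ≤ Real.sqrt (∑ j, (S *ᵥ ec) j ^ 2) + Real.sqrt (∑ j, (-(S *ᵥ et)) j ^ 2) :=
            l2_triangle _ _
        _ ≤ κ + κ := by
            apply add_le_add (hcheck i)
            simp only [Pi.neg_apply, neg_sq]
            exact htrue i
        _ = 2 * κ := by ring
    calc |d i| = |(S *ᵥ e) ⬝ᵥ w| := by rw [hde, key]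
      _ ≤ Real.sqrt (∑ j, (S *ᵥ e) j ^ 2) * Real.sqrt (∑ j, w j ^ 2) := cauchy_abs _ _
      _ ≤ (2 * κ) * (Real.sqrt ((N:ℝ)+1) * ‖w‖) := by
          apply mul_le_mul hnorm hl2w (Real.sqrt_nonneg _)
          positivity
      _ = 2 * Real.sqrt ((N:ℝ)+1) * κ * ‖w‖ := by ring
  constructor
  · apply pi_norm_le_iff_of_nonneg (by positivity) |>.2
    intro i
    rw [Real.norm_eq_abs]
    exact hcoord i
  · have hrev : p ⬝ᵥ (αc + Bc *ᵥ p) - p ⬝ᵥ (α + B *ᵥ p) = ∑ i, p i * d i := by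
      simp only [hd, dotProduct, Pi.sub_apply, Pi.add_apply, ← Finset.sum_sub_distrib]
      apply Finset.sum_congr rfl
      intro i _
      ring
    rw [hrev]
    calc |∑ i, p i * d i| ≤ ∑ i, |p i * d i| := Finset.abs_sum_le_sum_abs _ _
      _ ≤ ∑ _i : Fin N, pu * (2 * Real.sqrt ((N:ℝ)+1) * κ * ‖w‖) := by
          apply Finset.sum_le_sum
          intro i _
          rw [abs_mul]
          apply mul_le_mul _ (hcoord i) (abs_nonneg _) (le_trans hpl (le_trans (hp i).1 (hp i).2))
          rw [abs_of_nonneg (le_trans hpl (hp i).1)]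
          exact (hp i).2
      _ = 2 * N * pu * Real.sqrt ((N:ℝ)+1) * κ * ‖w‖ := by
          rw [Finset.sum_const, Finset.card_univ, Fintype.card_fin, nsmul_eq_mul]
          ring
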